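/- (Levi–Moser identity.) Let q ∈ ℂ[[t]] and let φ be a formal power series in z, z̄ with φ = z + z̄ + O₃ (so φ_z has constant term 1 and is invertible). Set h = ∂₁₂S_q(φ⁻,φ)·φ_z·φ_z⁻. Then for every formal power series w in z, z̄: ∂_φℰ(q,φ)(w)·φ_z = ∂_z(ℰ(q,φ))·w + ∇⁺( h · ∇(w/φ_z) ). -/

import Mathlib

/- Common setup: formal power series in two commuting variables `z, z̄` over `ℂ`,
represented by their coefficient functions, together with the operators of
Treschev's linearizable billiard construction. -/

open scoped BigOperators

noncomputable section

namespace Treschev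

/-- A formal power series `f = Σ_{j,k≥0} f_{j,k} z^j z̄^k`, given by its coefficients. -/
abbrev FPS : Type := ℕ → ℕ → ℂ

/-- A formal power series in one variable `t`, given by its coefficients. -/
abbrev OPS : Type := ℕ → ℂ

/-- Product of two formal power series (Cauchy product). -/
def fmul (f g : FPS) : FPS := fun j k =>
  ∑ a ∈ Finset.range (j + 1), ∑ b ∈ Finset.range (k + 1), f a b * g (j - a) (k - b)

/-- The constant series `1`. -/
def oneF : FPS := fun j k => if j = 0 ∧ k = 0 then 1 else 0

/-- Powers of a formal power series. -/
def fpow (f : FPS) : ℕ → FPS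
  | 0 => oneF
  | n + 1 => fmul f (fpow f n)

/-- Substitution of a two-variable series `u` with zero constant term into a
one-variable series `q` (the formula is the correct one whenever `u 0 0 = 0`). -/
def substOne (q : OPS) (u : FPS) : FPS := fun j k =>
  ∑ m ∈ Finset.range (j + k + 1), q m * fpow u m j k

/-- Substitution `F(u, v)` of two series with zero constant term into a two-variable
series `F` (the formula is the correct one whenever `u 0 0 = 0` and `v 0 0 = 0`). -/
def subst2 (F : FPS) (u v : FPS) : FPS := fun j k =>
  ∑ m ∈ Finset.range (j + k + 1), ∑ n ∈ Finset.range (j + k + 1),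
    F m n * fmul (fpow u m) (fpow v n) j k

/-- The Taylor series of `cos`. -/
def cosSeries : OPS := fun n => if n % 2 = 0 then (-1 : ℂ) ^ (n / 2) / (n.factorial : ℂ) else 0

/-- `(t₁ + t₂)/2` as a two-variable series. -/
def halfSum : FPS := fun j k =>
  if j = 1 ∧ k = 0 then (1 / 2 : ℂ) else if j = 0 ∧ k = 1 then (1 / 2 : ℂ) else 0

/-- `(t₁ − t₂)/2` as a two-variable series. -/
def halfDiff : FPS := fun j k =>
  if j = 1 ∧ k = 0 then (1 / 2 : ℂ) else if j = 0 ∧ k = 1 then (-(1 / 2) : ℂ) else 0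

/-- The generating function `S_q(t₁,t₂) = q((t₁+t₂)/2)·cos((t₁−t₂)/2)` as a
formal power series in `t₁, t₂`. -/
def Sq (q : OPS) : FPS := fmul (substOne q halfSum) (substOne cosSeries halfDiff)

/-- Formal partial derivative with respect to the first variable. -/
def d1 (f : FPS) : FPS := fun j k => ((j + 1 : ℕ) : ℂ) * f (j + 1) k

/-- Formal partial derivative with respect to the second variable. -/
def d2 (f : FPS) : FPS := fun j k => ((k + 1 : ℕ) : ℂ) * f j (k + 1)

/-- `f⁺`, with `(f⁺)_{j,k} = λ^{j−k} f_{j,k}`. -/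
def plus (l : ℂ) (f : FPS) : FPS := fun j k => l ^ ((j : ℤ) - (k : ℤ)) * f j k

/-- `f⁻`, with `(f⁻)_{j,k} = λ^{k−j} f_{j,k}`. -/
def minus (l : ℂ) (f : FPS) : FPS := fun j k => l ^ ((k : ℤ) - (j : ℤ)) * f j k

/-- `∇f = f⁻ − λ⁻¹ f`. -/
def nab (l : ℂ) (f : FPS) : FPS := minus l f - l⁻¹ • f

/-- `∇⁺f = f − λ f⁺`. -/
def nabPlus (l : ℂ) (f : FPS) : FPS := f - l • plus l f

/-- The average `[f] = Σ_j f_{j,j} (z z̄)^j`. -/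
def avg (f : FPS) : FPS := fun j k => if j = k then f j k else 0

/-- The projection `Π₊(f) = [z f]/z`. -/
def Pip (f : FPS) : FPS := fun j k => if k = j + 1 then f j k else 0

/-- The projection `Π(f) = [z̄ f]/z̄`. -/
def Pim (f : FPS) : FPS := fun j k => if j = k + 1 then f j k else 0

/-- `E⁺`, the partial inverse of `∇⁺`. -/
def Eplus (l : ℂ) (f : FPS) : FPS := fun j k =>
  if k = j + 1 then 0 else f j k / (1 - l ^ ((j : ℤ) - (k : ℤ) + 1))

/-- `E`, the partial inverse of `∇`. -/
def Emin (l : ℂ) (f : FPS) : FPS := fun j k =>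
  if j = k + 1 then 0 else f j k / (l ^ ((k : ℤ) - (j : ℤ)) - l⁻¹)

/-- `Ẽ`, with `Ẽ(f − f⁺) = f − [f]`. -/
def Etilde (l : ℂ) (f : FPS) : FPS := fun j k =>
  if j = k then 0 else f j k / (1 - l ^ ((j : ℤ) - (k : ℤ)))

/-- `f ∘ I`, where `I(z,z̄) = (z̄,z)`. -/
def swapI (f : FPS) : FPS := fun j k => f k j

/-- Multiplication by `z`. -/
def mulz (f : FPS) : FPS := fun j k => if j = 0 then 0 else f (j - 1) k

/-- Multiplication by `z̄`. -/
def mulzbar (f : FPS) : FPS := fun j k => if k = 0 then 0 else f j (k - 1)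

/-- Division by `z` (valid on series divisible by `z`). -/
def divz (f : FPS) : FPS := fun j k => f (j + 1) k

/-- Multiplicative inverse `1/h` (the geometric-series formula, which is the correct
inverse whenever `h 0 0 ≠ 0`). -/
def finv (h : FPS) : FPS := fun j k =>
  (h 0 0)⁻¹ * ∑ m ∈ Finset.range (j + k + 1),
    fpow (fun a b => if a = 0 ∧ b = 0 then 0 else -(h a b) * (h 0 0)⁻¹) m j k

/-- Quotient `f/h` of formal power series. -/
def fdiv (f h : FPS) : FPS := fmul f (finv h)

/-- `ℰ(q,φ) = ∂₂S_q(φ⁻,φ) + ∂₁S_q(φ,φ⁺)`. -/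
def Err (l : ℂ) (q : OPS) (φ : FPS) : FPS :=
  subst2 (d2 (Sq q)) (minus l φ) φ + subst2 (d1 (Sq q)) φ (plus l φ)

/-- `∂_φℰ(q,φ)(w) = ∂₁₂S_q(φ⁻,φ)w⁻ + ∂₂₂S_q(φ⁻,φ)w + ∂₁₁S_q(φ,φ⁺)w + ∂₁₂S_q(φ,φ⁺)w⁺`. -/
def dErr (l : ℂ) (q : OPS) (φ : FPS) (w : FPS) : FPS :=
  fmul (subst2 (d1 (d2 (Sq q))) (minus l φ) φ) (minus l w)
    + fmul (subst2 (d2 (d2 (Sq q))) (minus l φ) φ) w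
    + fmul (subst2 (d1 (d1 (Sq q))) φ (plus l φ)) w
    + fmul (subst2 (d1 (d2 (Sq q))) φ (plus l φ)) (plus l w)

/-- `h = ∂₁₂S_q(φ⁻,φ)·φ_z·φ_z⁻`. -/
def hFun (l : ℂ) (q : OPS) (φ : FPS) : FPS :=
  fmul (fmul (subst2 (d1 (d2 (Sq q))) (minus l φ) φ) (d1 φ)) (minus l (d1 φ))

/-- `ψ = −E⁺( ℰ(q,φ)·φ_z − Π₊(ℰ(q,φ)·φ_z) )`. -/
def psiFun (l : ℂ) (q : OPS) (φ : FPS) : FPS :=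
  -Eplus l (fmul (Err l q φ) (d1 φ) - Pip (fmul (Err l q φ) (d1 φ)))

/-- `w = φ_z·E( ψ/h − Π(ψ/h) )`. -/
def wFun (l : ℂ) (q : OPS) (φ : FPS) : FPS :=
  fmul (d1 φ)
    (Emin l (fdiv (psiFun l q φ) (hFun l q φ) - Pim (fdiv (psiFun l q φ) (hFun l q φ))))

/-- `κ = ∂₁₂S_q(φ⁻,φ)·(λ⁻¹ φ_z⁻ φ_z̄ − λ φ_z̄⁻ φ_z)`. -/
def kappaFun (l : ℂ) (q : OPS) (φ : FPS) : FPS :=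
  fmul (subst2 (d1 (d2 (Sq q))) (minus l φ) φ)
    (l⁻¹ • fmul (minus l (d1 φ)) (d2 φ) - l • fmul (minus l (d2 φ)) (d1 φ))

/-- `g = φ_z̄ / φ_z`. -/
def gFun (φ : FPS) : FPS := fdiv (d2 φ) (d1 φ)

/-- `R₁ = ( −[z̄·ℰ·φ_z̄] + [z̄·g·[z·ℰ·φ_z]/z] ) / ( λ·z·[κ] )`. -/
def R1Fun (l : ℂ) (q : OPS) (φ : FPS) : FPS :=
  l⁻¹ • fmul (finv (avg (kappaFun l q φ)))
    (divz (-avg (mulzbar (fmul (Err l q φ) (d2 φ)))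
      + avg (mulzbar (fmul (gFun φ) (divz (avg (mulz (fmul (Err l q φ) (d1 φ)))))))))

/-- `R₂ = (1/z)·[ z̄·ψ·(λ⁻¹g − λg⁻)·([κ]−κ)/(κ·[κ]) ]`. -/
def R2Fun (l : ℂ) (q : OPS) (φ : FPS) : FPS :=
  divz (avg (mulzbar
    (fmul (fmul (psiFun l q φ) (l⁻¹ • gFun φ - l • minus l (gFun φ)))
      (fmul (avg (kappaFun l q φ) - kappaFun l q φ)
        (finv (fmul (kappaFun l q φ) (avg (kappaFun l q φ))))))))

/-- `R₃ = [z·∂_z(S_q(φ⁻,φ))]/z − ∇⁺( h·Π(ψ/h) )`. -/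
def R3Fun (l : ℂ) (q : OPS) (φ : FPS) : FPS :=
  Pip (d1 (subst2 (Sq q) (minus l φ) φ))
    - nabPlus l (fmul (hFun l q φ) (Pim (fdiv (psiFun l q φ) (hFun l q φ))))

/-- `R₄ = ∂_z(ℰ(q,φ))·(w/φ_z) + R₃/φ_z`. -/
def R4Fun (l : ℂ) (q : OPS) (φ : FPS) : FPS :=
  fmul (d1 (Err l q φ)) (fdiv (wFun l q φ) (d1 φ)) + fdiv (R3Fun l q φ) (d1 φ)

/-- `φ = z + z̄ + O₃`. -/
def normalized (φ : FPS) : Prop :=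
  φ 0 0 = 0 ∧ φ 1 0 = 1 ∧ φ 0 1 = 1 ∧ φ 2 0 = 0 ∧ φ 1 1 = 0 ∧ φ 0 2 = 0

/-- The weighted norm `‖f‖_ρ = Σ_{j,k} |f_{j,k}| ρ^{j+k} ∈ [0,∞]`. -/
def wnorm (ρ : ℝ) (f : FPS) : ENNReal :=
  ∑' p : ℕ × ℕ, ENNReal.ofReal (‖f p.1 p.2‖ * ρ ^ (p.1 + p.2))

/-- `D(f) = Σ_{n≥1} n f_n (z z̄)^n` for a series in `z z̄`. -/
def Dop (f : FPS) : FPS := fun j k => if j = k then (j : ℂ) * f j k else 0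

/-- `D̄(f − f₀) = Σ_{n≥1} (f_n/n) (z z̄)^n` for a series in `z z̄`. -/
def Dbar (f : FPS) : FPS := fun j k => if j = k ∧ j ≠ 0 then f j k / (j : ℂ) else 0

/-- The constant part `f₀` of a series. -/
def constPart (f : FPS) : FPS := fun j k => if j = 0 ∧ k = 0 then f 0 0 else 0

/-- `ξ₀ = ((λ⁻¹+1)z + (λ+1)z̄)/2`. -/
def xi0 (l : ℂ) : FPS := fun a b =>
  if a = 1 ∧ b = 0 then (l⁻¹ + 1) / 2 else if a = 0 ∧ b = 1 then (l + 1) / 2 else 0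


section LeviMoserAux

open PowerSeries

/-- Transfer to iterated one-variable power series. -/
def T (f : FPS) : PowerSeries (PowerSeries ℂ) :=
  PowerSeries.mk fun j => PowerSeries.mk (f j)

lemma T_coeff (f : FPS) (j k : ℕ) :
    PowerSeries.coeff k (PowerSeries.coeff j (T f)) = f j k := by
  simp [T]

lemma T_injective : Function.Injective T := by
  intro f g h
  funext j k
  rw [← T_coeff f j k, ← T_coeff g j k, h]

lemma fmul_eq (f g : FPS) (j k : ℕ) :
    fmul f g j k = ∑ p ∈ Finset.HasAntidiagonal.antidiagonal j, ∑ q ∈ Finset.HasAntidiagonal.antidiagonal k,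
      f p.1 q.1 * g p.2 q.2 := by
  rw [Finset.Nat.sum_antidiagonal_eq_sum_range_succ_mk]
  simp only [fmul]
  exact Finset.sum_congr rfl fun a _ =>
    (Finset.Nat.sum_antidiagonal_eq_sum_range_succ_mk
      (fun q => f a q.1 * g (j - a) q.2) k).symm

lemma T_mul (f g : FPS) : T (fmul f g) = T f * T g := by
  apply PowerSeries.ext; intro j
  apply PowerSeries.ext; intro k
  rw [PowerSeries.coeff_mul, map_sum, T_coeff, fmul_eq]
  refine Finset.sum_congr rfl fun p _ => ?_
  rw [PowerSeries.coeff_mul]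
  exact Finset.sum_congr rfl fun q _ => by rw [T_coeff, T_coeff]

lemma T_one : T oneF = 1 := by
  apply PowerSeries.ext; intro j
  apply PowerSeries.ext; intro k
  rw [T_coeff]
  rcases Nat.eq_zero_or_pos j with hj | hj
  · subst hj
    simp [oneF, PowerSeries.coeff_one]
  · have : j ≠ 0 := hj.ne'
    simp [oneF, PowerSeries.coeff_one, this]

lemma T_d1 (f : FPS) : T (d1 f) = derivativeFun (T f) := by
  apply PowerSeries.ext; intro j
  apply PowerSeries.ext; intro k
  rw [T_coeff, show derivativeFun (T f) = derivative _ (T f) from rfl, coeff_derivativeFun]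
  have : ((j : PowerSeries ℂ) + 1) = PowerSeries.C ((j : ℂ) + 1) := by
    rw [map_add, map_natCast, map_one]
  rw [this, PowerSeries.coeff_mul_C, T_coeff]
  simp [d1]; ring

lemma fmul_comm (f g : FPS) : fmul f g = fmul g f :=
  T_injective (by rw [T_mul, T_mul, mul_comm])

lemma fmul_assoc (f g h : FPS) : fmul (fmul f g) h = fmul f (fmul g h) :=
  T_injective (by rw [T_mul, T_mul, T_mul, T_mul, mul_assoc])

lemma fmul_left_comm (f g h : FPS) : fmul f (fmul g h) = fmul g (fmul f h) :=
  T_injective (by rw [T_mul, T_mul, T_mul, T_mul, mul_left_comm])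

lemma one_fmul (f : FPS) : fmul oneF f = f :=
  T_injective (by rw [T_mul, T_one, one_mul])

lemma fmul_one (f : FPS) : fmul f oneF = f :=
  T_injective (by rw [T_mul, T_one, mul_one])

lemma add_fmul (f g h : FPS) : fmul (f + g) h = fmul f h + fmul g h := by
  funext j k
  simp only [fmul_eq, Pi.add_apply, add_mul, Finset.sum_add_distrib]

lemma fmul_add (f g h : FPS) : fmul f (g + h) = fmul f g + fmul f h := by
  funext j k
  simp only [fmul_eq, Pi.add_apply, mul_add, Finset.sum_add_distrib]

lemma smul_fmul (c : ℂ) (f g : FPS) : fmul (c • f) g = c • fmul f g := by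
  funext j k
  simp only [fmul_eq, Pi.smul_apply, smul_eq_mul, Finset.mul_sum, mul_assoc]

lemma fmul_smul (c : ℂ) (f g : FPS) : fmul f (c • g) = c • fmul f g := by
  funext j k
  simp only [fmul_eq, Pi.smul_apply, smul_eq_mul, Finset.mul_sum]
  exact Finset.sum_congr rfl fun p _ => Finset.sum_congr rfl fun q _ => by ring

lemma sub_fmul (f g h : FPS) : fmul (f - g) h = fmul f h - fmul g h := by
  funext j k
  simp only [fmul_eq, Pi.sub_apply, sub_mul, Finset.sum_sub_distrib]

lemma fmul_sub (f g h : FPS) : fmul f (g - h) = fmul f g - fmul f h := by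
  funext j k
  simp only [fmul_eq, Pi.sub_apply, mul_sub, Finset.sum_sub_distrib]

lemma fmul_sum {ι : Type*} (s : Finset ι) (f : ι → FPS) (g : FPS) :
    fmul (∑ i ∈ s, f i) g = ∑ i ∈ s, fmul (f i) g := by
  classical
  induction s using Finset.induction_on with
  | empty =>
      funext j k
      simp [fmul_eq]
  | insert _ _ hx ih =>
      rw [Finset.sum_insert hx, Finset.sum_insert hx, add_fmul, ih]

lemma d1_add (f g : FPS) : d1 (f + g) = d1 f + d1 g := by
  funext j k; simp [d1]; ring

lemma d1_smul (c : ℂ) (f : FPS) : d1 (c • f) = c • d1 f := by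
  funext j k; simp [d1]; ring

lemma d1_one : d1 oneF = 0 := by
  funext j k; simp [d1, oneF]

lemma T_add (f g : FPS) : T (f + g) = T f + T g := by
  apply PowerSeries.ext; intro j
  apply PowerSeries.ext; intro k
  rw [T_coeff, map_add, map_add, T_coeff, T_coeff]
  rfl

lemma d1_fmul (f g : FPS) : d1 (fmul f g) = fmul (d1 f) g + fmul f (d1 g) := by
  apply T_injective
  rw [T_add, T_d1, T_mul, T_mul, T_mul, T_d1, T_d1, derivativeFun_mul,
    smul_eq_mul, smul_eq_mul]
  ring

end LeviMoserAux


lemma swapI_fmul (f g : FPS) : swapI (fmul f g) = fmul (swapI f) (swapI g) := by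
  funext j k
  simp only [swapI, fmul_eq]
  rw [Finset.sum_comm]

lemma d2_eq (f : FPS) : d2 f = swapI (d1 (swapI f)) := by
  funext j k; simp [d1, d2, swapI]

lemma swapI_swapI (f : FPS) : swapI (swapI f) = f := rfl

lemma swapI_add (f g : FPS) : swapI (f + g) = swapI f + swapI g := rfl

lemma d2_fmul (f g : FPS) : d2 (fmul f g) = fmul (d2 f) g + fmul f (d2 g) := by
  rw [d2_eq (fmul f g), swapI_fmul, d1_fmul, swapI_add, swapI_fmul, swapI_fmul,
    swapI_swapI, swapI_swapI, ← d2_eq, ← d2_eq]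

lemma d2_add (f g : FPS) : d2 (f + g) = d2 f + d2 g := by
  funext j k; simp [d2]; ring

lemma d2_smul (c : ℂ) (f : FPS) : d2 (c • f) = c • d2 f := by
  funext j k; simp [d2]; ring

lemma d2_one : d2 oneF = 0 := by
  funext j k; simp [d2, oneF]

lemma d1_d2_comm (f : FPS) : d1 (d2 f) = d2 (d1 f) := by
  funext j k; simp [d1, d2]; ring

section MinusPlus

variable {l : ℂ}

lemma minus_fmul (hl : l ≠ 0) (f g : FPS) :
    minus l (fmul f g) = fmul (minus l f) (minus l g) := by
  funext j k
  simp only [minus, fmul_eq, Finset.mul_sum]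
  refine Finset.sum_congr rfl fun p hp => Finset.sum_congr rfl fun q hq => ?_
  have hp := Finset.HasAntidiagonal.mem_antidiagonal.mp hp
  have hq := Finset.HasAntidiagonal.mem_antidiagonal.mp hq
  have he : ((k : ℤ) - j) = ((q.1 : ℤ) - p.1) + ((q.2 : ℤ) - p.2) := by omega
  rw [he, zpow_add₀ hl]; ring

lemma minus_one : minus l oneF = oneF := by
  funext j k
  by_cases h : j = 0 ∧ k = 0
  · obtain ⟨h1, h2⟩ := h; subst h1; subst h2; simp [minus, oneF]
  · simp [minus, oneF, h]

lemma minus_fpow (hl : l ≠ 0) (f : FPS) (m : ℕ) :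
    fpow (minus l f) m = minus l (fpow f m) := by
  induction m with
  | zero => exact minus_one.symm
  | succ m ih => rw [fpow, ih, fpow, minus_fmul hl]

lemma minus_subst2 (hl : l ≠ 0) (F u v : FPS) :
    minus l (subst2 F u v) = subst2 F (minus l u) (minus l v) := by
  funext j k
  simp only [subst2, minus, Finset.mul_sum]
  refine Finset.sum_congr rfl fun m _ => Finset.sum_congr rfl fun n _ => ?_
  rw [minus_fpow hl, minus_fpow hl, ← minus_fmul hl]
  simp only [minus]; ring

lemma plus_eq_minus (f : FPS) : plus l f = minus l⁻¹ f := by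
  funext j k
  simp only [plus, minus, inv_zpow, ← zpow_neg, neg_sub]

lemma plus_minus (hl : l ≠ 0) (f : FPS) : plus l (minus l f) = f := by
  funext j k
  show l ^ ((j : ℤ) - k) * (l ^ ((k : ℤ) - j) * f j k) = f j k
  rw [← mul_assoc, ← zpow_add₀ hl]
  norm_num

lemma minus_d1 (hl : l ≠ 0) (f : FPS) :
    d1 (minus l f) = l⁻¹ • minus l (d1 f) := by
  funext j k
  show ((j + 1 : ℕ) : ℂ) * (l ^ ((k : ℤ) - ((j + 1 : ℕ) : ℤ)) * f (j + 1) k)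
      = l⁻¹ * (l ^ ((k : ℤ) - j) * (((j + 1 : ℕ) : ℂ) * f (j + 1) k))
  have he : ((k : ℤ) - ((j + 1 : ℕ) : ℤ)) = (-1) + ((k : ℤ) - j) := by push_cast; ring
  rw [he, zpow_add₀ hl, zpow_neg_one]
  ring

lemma minus_d2 (hl : l ≠ 0) (f : FPS) :
    d2 (minus l f) = l • minus l (d2 f) := by
  funext j k
  show ((k + 1 : ℕ) : ℂ) * (l ^ (((k + 1 : ℕ) : ℤ) - j) * f j (k + 1))
      = l * (l ^ ((k : ℤ) - j) * (((k + 1 : ℕ) : ℂ) * f j (k + 1)))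
  have he : (((k + 1 : ℕ) : ℤ) - j) = 1 + ((k : ℤ) - j) := by push_cast; ring
  rw [he, zpow_add₀ hl, zpow_one]
  ring

lemma plus_fmul (hl : l ≠ 0) (f g : FPS) :
    plus l (fmul f g) = fmul (plus l f) (plus l g) := by
  rw [plus_eq_minus, plus_eq_minus, plus_eq_minus, minus_fmul (inv_ne_zero hl)]

lemma plus_d1 (hl : l ≠ 0) (f : FPS) : d1 (plus l f) = l • plus l (d1 f) := by
  rw [plus_eq_minus, plus_eq_minus, minus_d1 (inv_ne_zero hl), inv_inv]

lemma minus_smul (c : ℂ) (f : FPS) : minus l (c • f) = c • minus l f := by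
  funext j k; simp [minus]; ring

lemma minus_sub (f g : FPS) : minus l (f - g) = minus l f - minus l g := by
  funext j k; simp [minus]; ring

lemma plus_smul (c : ℂ) (f : FPS) : plus l (c • f) = c • plus l f := by
  rw [plus_eq_minus, plus_eq_minus, minus_smul]

lemma plus_sub (f g : FPS) : plus l (f - g) = plus l f - plus l g := by
  rw [plus_eq_minus, plus_eq_minus, plus_eq_minus, minus_sub]

end MinusPlus


section Subst

lemma zero_fmul (g : FPS) : fmul 0 g = 0 := by
  funext j k; simp [fmul]

lemma fmul_right_comm (f g h : FPS) : fmul (fmul f g) h = fmul (fmul f h) g := by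
  rw [fmul_assoc, fmul_comm g h, ← fmul_assoc]

lemma fmul_coeff_zero_left {A : FPS} (B : FPS) {j k : ℕ}
    (h : ∀ a b, a ≤ j → b ≤ k → A a b = 0) : fmul A B j k = 0 := by
  simp only [fmul]
  refine Finset.sum_eq_zero fun a ha => Finset.sum_eq_zero fun b hb => ?_
  have ha := Finset.mem_range.mp ha
  have hb := Finset.mem_range.mp hb
  rw [h a b (by omega) (by omega), zero_mul]

lemma fmul_congr_left {A A' : FPS} (B : FPS) {j k : ℕ}
    (h : ∀ a b, a ≤ j → b ≤ k → A a b = A' a b) : fmul A B j k = fmul A' B j k := by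
  simp only [fmul]
  refine Finset.sum_congr rfl fun a ha => Finset.sum_congr rfl fun b hb => ?_
  have ha := Finset.mem_range.mp ha
  have hb := Finset.mem_range.mp hb
  rw [h a b (by omega) (by omega)]

lemma fpow_vanish {u : FPS} (hu : u 0 0 = 0) :
    ∀ m j k, j + k < m → fpow u m j k = 0 := by
  intro m
  induction m with
  | zero => intro j k h; omega
  | succ m ih =>
      intro j k h
      show fmul u (fpow u m) j k = 0
      simp only [fmul]
      refine Finset.sum_eq_zero fun a ha => Finset.sum_eq_zero fun b hb => ?_
      have ha := Finset.mem_range.mp ha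
      have hb := Finset.mem_range.mp hb
      by_cases hab : a = 0 ∧ b = 0
      · obtain ⟨h1, h2⟩ := hab; subst h1; subst h2; rw [hu, zero_mul]
      · rw [ih (j - a) (k - b) (by omega), mul_zero]

lemma fmul_fpow_vanish {u v : FPS} (hu : u 0 0 = 0) (hv : v 0 0 = 0)
    {m n j k : ℕ} (h : j + k < m + n) :
    fmul (fpow u m) (fpow v n) j k = 0 := by
  simp only [fmul]
  refine Finset.sum_eq_zero fun a ha => Finset.sum_eq_zero fun b hb => ?_
  have ha := Finset.mem_range.mp ha
  have hb := Finset.mem_range.mp hb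
  by_cases hm : a + b < m
  · rw [fpow_vanish hu m a b hm, zero_mul]
  · rw [fpow_vanish hv n (j - a) (k - b) (by omega), mul_zero]

lemma subst2_ext {u v : FPS} (hu : u 0 0 = 0) (hv : v 0 0 = 0) (F : FPS)
    {j k M : ℕ} (hM : j + k < M) :
    subst2 F u v j k
      = ∑ m ∈ Finset.range M, ∑ n ∈ Finset.range M,
          F m n * fmul (fpow u m) (fpow v n) j k := by
  rw [subst2]
  have h1 : ∀ m, ∑ n ∈ Finset.range (j + k + 1), F m n * fmul (fpow u m) (fpow v n) j k
      = ∑ n ∈ Finset.range M, F m n * fmul (fpow u m) (fpow v n) j k := by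
    intro m
    refine Finset.sum_subset (Finset.range_subset_range.mpr (by omega)) fun n _ hn => ?_
    simp only [Finset.mem_range, not_lt] at hn
    rw [fmul_fpow_vanish hu hv (by omega), mul_zero]
  calc ∑ m ∈ Finset.range (j + k + 1), ∑ n ∈ Finset.range (j + k + 1),
          F m n * fmul (fpow u m) (fpow v n) j k
      = ∑ m ∈ Finset.range (j + k + 1), ∑ n ∈ Finset.range M,
          F m n * fmul (fpow u m) (fpow v n) j k :=
        Finset.sum_congr rfl fun m _ => h1 m
    _ = ∑ m ∈ Finset.range M, ∑ n ∈ Finset.range M,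
          F m n * fmul (fpow u m) (fpow v n) j k := by
        refine Finset.sum_subset (Finset.range_subset_range.mpr (by omega)) fun m _ hm => ?_
        simp only [Finset.mem_range, not_lt] at hm
        refine Finset.sum_eq_zero fun n _ => ?_
        rw [fmul_fpow_vanish hu hv (by omega), mul_zero]

lemma d1_fpow (u : FPS) (m : ℕ) :
    d1 (fpow u (m + 1)) = ((m + 1 : ℕ) : ℂ) • fmul (fpow u m) (d1 u) := by
  induction m with
  | zero =>
      show d1 (fmul u (fpow u 0)) = _
      rw [show fpow u 0 = oneF from rfl, fmul_one, one_fmul]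
      simp
  | succ m ih =>
      show d1 (fmul u (fpow u (m + 1))) = _
      rw [d1_fmul, ih, fmul_smul, ← fmul_assoc,
        show fmul u (fpow u m) = fpow u (m + 1) from rfl,
        fmul_comm (d1 u) (fpow u (m + 1))]
      funext j k
      simp only [Pi.add_apply, Pi.smul_apply, smul_eq_mul]
      push_cast
      ring

lemma fmul_zero (f : FPS) : fmul f 0 = 0 := by
  funext j k; simp [fmul]

lemma d1_subst2 {u v : FPS} (hu : u 0 0 = 0) (hv : v 0 0 = 0) (F : FPS) :
    d1 (subst2 F u v)
      = fmul (subst2 (d1 F) u v) (d1 u) + fmul (subst2 (d2 F) u v) (d1 v) := by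
  funext j k
  have key : ∀ (G w : FPS),
      fmul (subst2 G u v) w j k
        = ∑ m ∈ Finset.range (j + k + 1 + 1), ∑ n ∈ Finset.range (j + k + 1 + 1),
            G m n * fmul (fmul (fpow u m) (fpow v n)) w j k := by
    intro G w
    have hW : fmul (subst2 G u v) w j k
        = fmul (∑ m ∈ Finset.range (j + k + 1 + 1),
            ∑ n ∈ Finset.range (j + k + 1 + 1),
              G m n • fmul (fpow u m) (fpow v n)) w j k := by
      refine fmul_congr_left w fun a b haj hbk => ?_
      rw [subst2_ext hu hv G (M := j + k + 1 + 1) (by omega)]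
      rw [Finset.sum_apply, Finset.sum_apply]
      refine Finset.sum_congr rfl fun m _ => ?_
      rw [Finset.sum_apply, Finset.sum_apply]
      exact Finset.sum_congr rfl fun n _ => rfl
    rw [hW, fmul_sum, Finset.sum_apply, Finset.sum_apply]
    refine Finset.sum_congr rfl fun m _ => ?_
    rw [fmul_sum, Finset.sum_apply, Finset.sum_apply]
    refine Finset.sum_congr rfl fun n _ => ?_
    rw [smul_fmul]
    rfl
  have hL : d1 (subst2 F u v) j k
      = ∑ m ∈ Finset.range (j + k + 1 + 1), ∑ n ∈ Finset.range (j + k + 1 + 1),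
          F m n * (fmul (d1 (fpow u m)) (fpow v n) j k
            + fmul (fpow u m) (d1 (fpow v n)) j k) := by
    simp only [d1]
    rw [subst2_ext hu hv F (M := j + k + 1 + 1) (by omega), Finset.mul_sum]
    refine Finset.sum_congr rfl fun m _ => ?_
    rw [Finset.mul_sum]
    refine Finset.sum_congr rfl fun n _ => ?_
    have h2 : ((j + 1 : ℕ) : ℂ) * fmul (fpow u m) (fpow v n) (j + 1) k
        = fmul (d1 (fpow u m)) (fpow v n) j k
          + fmul (fpow u m) (d1 (fpow v n)) j k := by
      have : ((j + 1 : ℕ) : ℂ) * fmul (fpow u m) (fpow v n) (j + 1) k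
          = d1 (fmul (fpow u m) (fpow v n)) j k := rfl
      rw [this, d1_fmul]; rfl
    linear_combination F m n * h2
  simp only [Pi.add_apply]
  rw [hL, key (d1 F) (d1 u), key (d2 F) (d1 v)]
  simp only [mul_add, Finset.sum_add_distrib]
  congr 1
  -- first summand : the u-derivative part
  · conv_lhs => rw [Finset.sum_range_succ']
    conv_rhs => rw [Finset.sum_range_succ]
    have hlast : ∑ n ∈ Finset.range (j + k + 1 + 1),
        d1 F (j + k + 1) n * fmul (fmul (fpow u (j + k + 1)) (fpow v n)) (d1 u) j k = 0 := by
      refine Finset.sum_eq_zero fun n _ => ?_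
      rw [fmul_coeff_zero_left (d1 u)
        (fun a b haj hbk => fmul_fpow_vanish hu hv (by omega)), mul_zero]
    rw [hlast, add_zero]
    have hzero : ∑ n ∈ Finset.range (j + k + 1 + 1),
        F 0 n * fmul (d1 (fpow u 0)) (fpow v n) j k = 0 := by
      refine Finset.sum_eq_zero fun n _ => ?_
      rw [show fpow u 0 = oneF from rfl, d1_one, zero_fmul]
      simp
    rw [hzero, add_zero]
    refine Finset.sum_congr rfl fun m _ => Finset.sum_congr rfl fun n _ => ?_
    rw [d1_fpow, smul_fmul, fmul_right_comm]
    simp only [Pi.smul_apply, smul_eq_mul, d1]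
    push_cast
    ring
  -- second summand : the v-derivative part
  · refine Finset.sum_congr rfl fun m _ => ?_
    conv_lhs => rw [Finset.sum_range_succ']
    conv_rhs => rw [Finset.sum_range_succ]
    have hlast : d2 F m (j + k + 1)
        * fmul (fmul (fpow u m) (fpow v (j + k + 1))) (d1 v) j k = 0 := by
      rw [fmul_coeff_zero_left (d1 v)
        (fun a b haj hbk => fmul_fpow_vanish hu hv (by omega)), mul_zero]
    rw [hlast, add_zero]
    have hzero : F m 0 * fmul (fpow u m) (d1 (fpow v 0)) j k = 0 := by
      rw [show fpow v 0 = oneF from rfl, d1_one, fmul_zero]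
      simp
    rw [hzero, add_zero]
    refine Finset.sum_congr rfl fun n _ => ?_
    rw [d1_fpow, fmul_smul, ← fmul_assoc]
    simp only [Pi.smul_apply, smul_eq_mul, d2]
    push_cast
    ring

end Subst


section Inv

lemma fmul_congr_right (A : FPS) {B B' : FPS} {j k : ℕ}
    (h : ∀ a b, a ≤ j → b ≤ k → B a b = B' a b) : fmul A B j k = fmul A B' j k := by
  simp only [fmul]
  refine Finset.sum_congr rfl fun a ha => Finset.sum_congr rfl fun b hb => ?_
  have ha := Finset.mem_range.mp ha
  have hb := Finset.mem_range.mp hb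
  rw [h (j - a) (k - b) (by omega) (by omega)]

lemma fmul_sum_right {ι : Type*} (s : Finset ι) (f : FPS) (g : ι → FPS) :
    fmul f (∑ i ∈ s, g i) = ∑ i ∈ s, fmul f (g i) := by
  rw [fmul_comm, fmul_sum]
  exact Finset.sum_congr rfl fun i _ => fmul_comm _ _

lemma fmul_finv {h : FPS} (h0 : h 0 0 ≠ 0) : fmul h (finv h) = oneF := by
  set g : FPS := fun a b => if a = 0 ∧ b = 0 then 0 else -(h a b) * (h 0 0)⁻¹ with hgdef
  have hg : g 0 0 = 0 := by simp [hgdef]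
  set geom : FPS := fun j k => ∑ m ∈ Finset.range (j + k + 1), fpow g m j k with hgeomdef
  have hfinv : finv h = (h 0 0)⁻¹ • geom := rfl
  have hh : h = (h 0 0) • (oneF - g) := by
    funext a b
    by_cases hab : a = 0 ∧ b = 0
    · obtain ⟨h1, h2⟩ := hab; subst h1; subst h2
      simp [hgdef, oneF]
    · have h1 : oneF a b = 0 := by unfold oneF; exact if_neg hab
      simp only [Pi.smul_apply, Pi.sub_apply, h1, hgdef, if_neg hab, smul_eq_mul]
      field_simp
      ring
  have main : fmul (oneF - g) geom = oneF := by
    funext j k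
    have hgeom : ∀ a b, a ≤ j → b ≤ k →
        geom a b = (∑ m ∈ Finset.range (j + k + 1), fpow g m) a b := by
      intro a b haj hbk
      rw [Finset.sum_apply, Finset.sum_apply, hgeomdef]
      refine Finset.sum_subset (Finset.range_subset_range.mpr (by omega)) fun m _ hm => ?_
      simp only [Finset.mem_range, not_lt] at hm
      exact fpow_vanish hg m a b (by omega)
    rw [fmul_congr_right _ hgeom, fmul_sum_right]
    have hterm : ∀ m, fmul (oneF - g) (fpow g m) = fpow g m - fpow g (m + 1) := by
      intro m
      rw [sub_fmul, one_fmul, show fmul g (fpow g m) = fpow g (m + 1) from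
        (fmul_comm _ _).trans (fmul_comm _ _)]
    calc (∑ m ∈ Finset.range (j + k + 1), fmul (oneF - g) (fpow g m)) j k
        = (∑ m ∈ Finset.range (j + k + 1), (fpow g m - fpow g (m + 1))) j k := by
          rw [Finset.sum_congr rfl fun m _ => hterm m]
      _ = (fpow g 0 - fpow g (j + k + 1)) j k := by
          rw [Finset.sum_range_sub' (fun m => fpow g m)]
      _ = oneF j k := by
          simp only [Pi.sub_apply, fpow_vanish hg (j + k + 1) j k (by omega), sub_zero]
          rfl
  rw [hfinv, fmul_smul,
    show fmul h geom = fmul (h 0 0 • (oneF - g)) geom from by rw [← hh],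
    smul_fmul, smul_smul, inv_mul_cancel₀ h0, one_smul, main]

lemma fmul_fdiv_cancel {h : FPS} (w : FPS) (h0 : h 0 0 ≠ 0) :
    fmul h (fdiv w h) = w := by
  rw [fdiv, fmul_left_comm, fmul_finv h0, fmul_one]

end Inv


section Assembly

lemma plus_subst2 {l : ℂ} (hl : l ≠ 0) (F u v : FPS) :
    plus l (subst2 F u v) = subst2 F (plus l u) (plus l v) := by
  rw [plus_eq_minus, plus_eq_minus, plus_eq_minus, minus_subst2 (inv_ne_zero hl)]

lemma d1_Err (l : ℂ) (hl0 : l ≠ 0) (q : OPS) (φ : FPS) (h00 : φ 0 0 = 0) :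
    d1 (Err l q φ)
      = l⁻¹ • fmul (subst2 (d1 (d2 (Sq q))) (minus l φ) φ) (minus l (d1 φ))
        + fmul (subst2 (d2 (d2 (Sq q))) (minus l φ) φ) (d1 φ)
        + fmul (subst2 (d1 (d1 (Sq q))) φ (plus l φ)) (d1 φ)
        + l • fmul (subst2 (d1 (d2 (Sq q))) φ (plus l φ)) (plus l (d1 φ)) := by
  have hm00 : minus l φ 0 0 = 0 := by simp [minus, h00]
  have hp00 : plus l φ 0 0 = 0 := by simp [plus, h00]
  unfold Err
  rw [d1_add, d1_subst2 hm00 h00, d1_subst2 h00 hp00,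
    minus_d1 hl0, plus_d1 hl0, fmul_smul, fmul_smul, ← d1_d2_comm]
  abel

lemma hFun_nab (l : ℂ) (hl0 : l ≠ 0) (q : OPS) (φ w : FPS) (h10 : d1 φ 0 0 ≠ 0) :
    fmul (hFun l q φ) (nab l (fdiv w (d1 φ)))
      = fmul (subst2 (d1 (d2 (Sq q))) (minus l φ) φ) (fmul (d1 φ) (minus l w))
        - l⁻¹ • fmul (subst2 (d1 (d2 (Sq q))) (minus l φ) φ)
            (fmul (minus l (d1 φ)) w) := by
  set S := subst2 (d1 (d2 (Sq q))) (minus l φ) φ with hS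
  have e1 : fmul (hFun l q φ) (minus l (fdiv w (d1 φ)))
      = fmul S (fmul (d1 φ) (minus l w)) := by
    unfold hFun
    rw [← hS, fmul_assoc (fmul S (d1 φ)), ← minus_fmul hl0,
      fmul_fdiv_cancel w h10, fmul_assoc]
  have e2 : fmul (hFun l q φ) (fdiv w (d1 φ))
      = fmul S (fmul (minus l (d1 φ)) w) := by
    unfold hFun
    rw [← hS, fmul_right_comm S (d1 φ) (minus l (d1 φ)), fmul_assoc,
      fmul_assoc, fmul_fdiv_cancel w h10]
  unfold nab
  rw [fmul_sub, fmul_smul, e1, e2]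

end Assembly

/-- (Levi–Moser identity) With `h = ∂₁₂S_q(φ⁻,φ)·φ_z·φ_z⁻`, for every
formal power series `w`:
`∂_φℰ(q,φ)(w)·φ_z = ∂_z(ℰ(q,φ))·w + ∇⁺( h·∇(w/φ_z) )`. -/
theorem levi_moser
    (l : ℂ) (hl : ‖l‖ = 1) (hru : ∀ n : ℕ, 0 < n → l ^ n ≠ 1)
    (q : OPS) (φ : FPS) (hφ : normalized φ) (w : FPS) :
    fmul (dErr l q φ w) (d1 φ) =
      fmul (d1 (Err l q φ)) w
        + nabPlus l (fmul (hFun l q φ) (nab l (fdiv w (d1 φ)))) := by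
  have hl0 : l ≠ 0 := fun h => by simp [h] at hl
  obtain ⟨h00, h10, -, -, -, -⟩ := hφ
  have hd0 : d1 φ 0 0 ≠ 0 := by simp [d1, h10]
  have hX := hFun_nab l hl0 q φ w hd0
  have hplusX : plus l (fmul (hFun l q φ) (nab l (fdiv w (d1 φ))))
      = fmul (subst2 (d1 (d2 (Sq q))) φ (plus l φ)) (fmul (plus l (d1 φ)) w)
        - l⁻¹ • fmul (subst2 (d1 (d2 (Sq q))) φ (plus l φ))
            (fmul (d1 φ) (plus l w)) := by
    rw [hX, plus_sub, plus_smul, plus_fmul hl0, plus_fmul hl0, plus_fmul hl0,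
      plus_fmul hl0, plus_subst2 hl0, plus_minus hl0, plus_minus hl0, plus_minus hl0]
  have comm3 : ∀ X y z : FPS, fmul (fmul X y) z = fmul X (fmul z y) := by
    intro X y z
    rw [fmul_assoc, fmul_comm y z]
  unfold nabPlus
  rw [hplusX, hX, d1_Err l hl0 q φ h00]
  unfold dErr
  rw [add_fmul, add_fmul, add_fmul, comm3, comm3, comm3, comm3,
    add_fmul, add_fmul, add_fmul, smul_fmul, smul_fmul,
    fmul_assoc, fmul_assoc, fmul_assoc, fmul_assoc]
  funext j k
  simp only [Pi.add_apply, Pi.sub_apply, Pi.smul_apply, smul_eq_mul]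
  field_simp
  ring

end Treschev

end
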